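/- Let K be a field and let A and A' be the two-dimensional algebras over K with bases {e₁, e₂} and {e'₁, e'₂} whose nonzero basis products are, respectively, e₁e₁ = e₁, e₁e₂ = e₂ = e₂e₁ (and e₂e₂ = 0), and e'₁e'₁ = e'₁ = e'₂e'₂, e'₁e'₂ = e'₂ = e'₂e'₁. If the characteristic of K is 2, then A and A' are isomorphic; indeed the linear map f with f(e₁) = e'₁ and f(e₂) = e'₁ + e'₂ is an isomorphism. If the characteristic of K is not 2, then A and A' are not isotopic. -/
import Mathlib


/-- The two-dimensional algebra `A` over `K` with nonzero basis products
`e₁e₁ = e₁`, `e₁e₂ = e₂ = e₂e₁` (and `e₂e₂ = 0`), realized on `Fin 2 → K`. -/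
def mulA (K : Type*) [Field K] (x y : Fin 2 → K) : Fin 2 → K :=
  ![x 0 * y 0, x 0 * y 1 + x 1 * y 0]

/-- The two-dimensional algebra `A'` over `K` with nonzero basis products
`e'₁e'₁ = e'₁ = e'₂e'₂`, `e'₁e'₂ = e'₂ = e'₂e'₁`, realized on `Fin 2 → K`. -/
def mulA' (K : Type*) [Field K] (x y : Fin 2 → K) : Fin 2 → K :=
  ![x 0 * y 0 + x 1 * y 1, x 0 * y 1 + x 1 * y 0]

lemma keyA (K : Type*) [Field K] (u w : Fin 2 → K) (hw : w ≠ 0)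
    (h0 : mulA K u w = 0) : u 0 = 0 := by
  by_contra hu
  have h1 : u 0 * w 0 = 0 := by
    have := congrFun h0 0; simpa [mulA] using this
  have h2 : u 0 * w 1 + u 1 * w 0 = 0 := by
    have := congrFun h0 1; simpa [mulA] using this
  have hw0 : w 0 = 0 := by
    rcases mul_eq_zero.mp h1 with h | h
    · exact absurd h hu
    · exact h
  have hw1 : w 1 = 0 := by
    rw [hw0, mul_zero, add_zero] at h2
    rcases mul_eq_zero.mp h2 with h | h
    · exact absurd h hu
    · exact h
  apply hw
  funext i; fin_cases i <;> assumption

theorem stmt_18 (K : Type*) [Field K] :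
    (ringChar K = 2 → ∃ f : (Fin 2 → K) ≃ₗ[K] (Fin 2 → K),
        f (Pi.single 0 1) = Pi.single 0 1 ∧
        f (Pi.single 1 1) = Pi.single 0 1 + Pi.single 1 1 ∧
        ∀ x y : Fin 2 → K, mulA' K (f x) (f y) = f (mulA K x y)) ∧
    (ringChar K ≠ 2 → ¬ ∃ f g h : (Fin 2 → K) ≃ₗ[K] (Fin 2 → K),
        ∀ x y : Fin 2 → K, mulA' K (f x) (g y) = h (mulA K x y)) := by
  constructor
  · intro hchar
    have h2 : (2 : K) = 0 := by
      have := ringChar.Nat.cast_ringChar (R := K)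
      rw [hchar] at this
      exact_mod_cast this
    refine ⟨{ toFun := fun x => ![x 0 + x 1, x 1],
              invFun := fun x => ![x 0 - x 1, x 1],
              map_add' := ?_, map_smul' := ?_, left_inv := ?_, right_inv := ?_ },
            ?_, ?_, ?_⟩
    · intro x y; funext i; fin_cases i <;> simp <;> ring
    · intro c x; funext i; fin_cases i <;> simp [mul_add]
    · intro x; funext i; fin_cases i <;> simp
    · intro x; funext i; fin_cases i <;> simp
    · funext i; fin_cases i <;> simp [Pi.single_apply]
    · funext i; fin_cases i <;> simp [Pi.single_apply]
    · intro x y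
      funext i; fin_cases i <;> simp [mulA, mulA']
      · linear_combination x 1 * y 1 * h2
      · linear_combination x 1 * y 1 * h2
  · rintro hchar ⟨f, g, h, hfgh⟩
    have h2 : (2 : K) ≠ 0 := Ring.two_ne_zero hchar
    set u : Fin 2 → K := f.symm ![1, 1] with hu
    set u' : Fin 2 → K := f.symm ![1, -1] with hu'
    set w : Fin 2 → K := g.symm ![1, -1] with hw
    set w' : Fin 2 → K := g.symm ![1, 1] with hw'
    have hwne : w ≠ 0 := by
      intro h0
      have : (![1, -1] : Fin 2 → K) = 0 := by
        rw [hw] at h0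
        simpa using congrArg g h0
      simpa using congrFun this 0
    have hw'ne : w' ≠ 0 := by
      intro h0
      have : (![1, 1] : Fin 2 → K) = 0 := by
        rw [hw'] at h0
        simpa using congrArg g h0
      simpa using congrFun this 0
    have hmul1 : mulA K u w = 0 := by
      have := hfgh u w
      rw [hu, hw, f.apply_symm_apply, g.apply_symm_apply] at this
      have hz : mulA' K ![1, 1] ![1, -1] = 0 := by
        funext i; fin_cases i <;> simp [mulA']
      rw [hz] at this
      have := this.symm
      rwa [← map_zero h, h.injective.eq_iff] at this
    have hmul2 : mulA K u' w' = 0 := by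
      have := hfgh u' w'
      rw [hu', hw', f.apply_symm_apply, g.apply_symm_apply] at this
      have hz : mulA' K ![1, -1] ![1, 1] = 0 := by
        funext i; fin_cases i <;> simp [mulA']
      rw [hz] at this
      have := this.symm
      rwa [← map_zero h, h.injective.eq_iff] at this
    have hu0 : u 0 = 0 := keyA K u w hwne hmul1
    have hu'0 : u' 0 = 0 := keyA K u' w' hw'ne hmul2
    -- consider c := (u' 1) • u - (u 1) • u'
    have hc : (u' 1) • u - (u 1) • u' = 0 := by
      funext i; fin_cases i <;> simp [hu0, hu'0] <;> ring
    have hfc : (u' 1) • (![1, 1] : Fin 2 → K) - (u 1) • ![1, -1] = 0 := by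
      have := congrArg f hc
      rw [map_sub, map_smul, map_smul, hu, hu', f.apply_symm_apply,
        f.apply_symm_apply, map_zero] at this
      exact this
    have e0 : u' 1 - u 1 = 0 := by simpa using congrFun hfc 0
    have e1 : u' 1 + u 1 = 0 := by
      have := congrFun hfc 1
      simpa [sub_eq_add_neg] using this
    have ht : u' 1 = 0 := by
      have : (2 : K) * u' 1 = 0 := by linear_combination e0 + e1
      rcases mul_eq_zero.mp this with hh | hh
      · exact absurd hh h2
      · exact hh
    have : u' = 0 := by funext i; fin_cases i <;> assumption
    have : (![1, -1] : Fin 2 → K) = 0 := by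
      rw [hu'] at this
      simpa using congrArg f this
    simpa using congrFun this 0
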